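/- For n ≥ 1, α ≥ 1/2, and ξ, rₙ > 0: Γ(αn)·(ξnrₙ)^{ξnrₙ}·e^{−ξnrₙ}/Γ(αn + ξnrₙ) ≤ 2·√(1+2ξrₙ)·exp{−n·α·Ψ(ξrₙ/α)}, where Ψ(t) = (1+t)·H₂(1/(1+t)) with H₂ the binary entropy function in nats. -/

import Mathlib

open Real Set

/-- `Ψ(t) = (1+t)·H₂(1/(1+t)) = (1+t)log(1+t) − t·log t` (binary entropy in nats). -/
noncomputable def Psi (t : ℝ) : ℝ := (1 + t) * Real.log (1 + t) - t * Real.log t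


lemma artanh_ge (u : ℝ) (h0 : 0 ≤ u) (h1 : u < 1) :
    2*u ≤ log (1+u) - log (1-u) := by
  set f : ℝ → ℝ := fun v => log (1+v) - log (1-v) - 2*v with hf
  have key : ∀ v ∈ Ico (0:ℝ) 1, HasDerivAt f ((1+v)⁻¹ + (1-v)⁻¹ - 2) v := by
    intro v hv
    have h1v : (0:ℝ) < 1 + v := by linarith [hv.1]
    have h2v : (0:ℝ) < 1 - v := by linarith [hv.2]
    have d1 : HasDerivAt (fun v : ℝ => log (1+v)) ((1+v)⁻¹) v := by
      simpa [Function.comp_def] using (Real.hasDerivAt_log h1v.ne').comp v ((hasDerivAt_id v).const_add 1)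
    have d2 : HasDerivAt (fun v : ℝ => log (1-v)) (-(1-v)⁻¹) v := by
      have := (Real.hasDerivAt_log h2v.ne').comp v ((hasDerivAt_id v).neg.const_add 1)
      simpa [Function.comp_def] using this
    have d3 : HasDerivAt (fun v : ℝ => 2*v) 2 v := by
      simpa using (hasDerivAt_id v).const_mul 2
    have := (d1.sub d2).sub d3
    exact this.congr_deriv (by ring)
  have hmono : MonotoneOn f (Ico (0:ℝ) 1) := by
    have hconv : Convex ℝ (Ico (0:ℝ) 1) := convex_Ico 0 1
    refine monotoneOn_of_deriv_nonneg hconv ?_ ?_ ?_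
    · exact fun v hv => ((key v hv).continuousAt).continuousWithinAt
    · intro v hv
      rw [interior_Ico] at hv
      exact (key v (Ioo_subset_Ico_self hv)).differentiableAt.differentiableWithinAt
    · intro v hv
      rw [interior_Ico] at hv
      rw [(key v (Ioo_subset_Ico_self hv)).deriv]
      have h1v : (0:ℝ) < 1 + v := by linarith [hv.1]
      have h2v : (0:ℝ) < 1 - v := by linarith [hv.2]
      have : (1+v)⁻¹ + (1-v)⁻¹ - 2 = v^2 * (2 / ((1+v)*(1-v))) := by
        field_simp; ring
      rw [this]
      positivity
  have h0' : f 0 = 0 := by simp [hf]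
  have := hmono (by simp : (0:ℝ) ∈ Ico (0:ℝ) 1) (by exact ⟨h0, h1⟩) h0
  rw [h0'] at this
  have : 0 ≤ log (1+u) - log (1-u) - 2*u := this
  linarith

lemma e_lt : exp 1 < 2.7182818286 := by have := Real.exp_one_lt_d9; linarith
lemma e_gt : (2.7182818283:ℝ) < exp 1 := by have := Real.exp_one_gt_d9; linarith
lemma pi_lt : π < 3.15 := by have := Real.pi_lt_d2; linarith
lemma pi_gt : (3.141592:ℝ) < π := by have := Real.pi_gt_d6; linarith

lemma sqrtpi_le : Real.sqrt π ≤ 9/5 := by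
  rw [show (9/5:ℝ) = Real.sqrt ((9/5)^2) by rw [Real.sqrt_sq]; norm_num]
  apply Real.sqrt_le_sqrt; nlinarith [pi_lt]
lemma sqrtpi_ge : (443/250:ℝ) ≤ Real.sqrt π := by
  rw [show (443/250:ℝ) = Real.sqrt ((443/250)^2) by rw [Real.sqrt_sq]; norm_num]
  apply Real.sqrt_le_sqrt; nlinarith [pi_gt]

lemma target_form (Cst z : ℝ) (hC : 0 < Cst) (hz : 0 < z) :
    Cst * z ^ (z - 1/2 : ℝ) * exp (-z) = exp (Real.log Cst + (z - 1/2) * Real.log z - z) := by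
  rw [Real.rpow_def_of_pos hz]
  rw [show Real.log Cst + (z - 1/2) * Real.log z - z
      = Real.log Cst + ((z - 1/2) * Real.log z + (-z)) by ring]
  rw [Real.exp_add, Real.exp_add, Real.exp_log hC, mul_assoc, mul_comm (Real.log z)]

lemma logGamma_chord {x y a b : ℝ} (hx : 0 < x) (hy : 0 < y)
    (ha : 0 ≤ a) (hb : 0 ≤ b) (hab : a + b = 1) :
    Real.log (Real.Gamma (a*x + b*y)) ≤ a * Real.log (Real.Gamma x) + b * Real.log (Real.Gamma y) := by
  have := Real.convexOn_log_Gamma.2 (mem_Ioi.2 hx) (mem_Ioi.2 hy) ha hb hab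
  simpa using this

lemma logGamma_slope {x y z : ℝ} (hx : 0 < x) (hxy : x < y) (hyz : y < z) :
    (Real.log (Real.Gamma y) - Real.log (Real.Gamma x))/(y - x)
      ≤ (Real.log (Real.Gamma z) - Real.log (Real.Gamma y))/(z - y) := by
  have := Real.convexOn_log_Gamma.slope_mono_adjacent (mem_Ioi.2 hx)
    (mem_Ioi.2 (hx.trans (hxy.trans hyz))) hxy hyz
  simpa [slope_def_field] using this

lemma Gamma_three_half : Real.Gamma (3/2) = Real.sqrt π / 2 := by
  have := Real.Gamma_add_one (by norm_num : (1/2:ℝ) ≠ 0)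
  rw [show (1/2:ℝ)+1 = 3/2 by norm_num] at this
  rw [this, Real.Gamma_one_half_eq]; ring

lemma Gamma_five_half : Real.Gamma (5/2) = 3 * Real.sqrt π / 4 := by
  have := Real.Gamma_add_one (by norm_num : (3/2:ℝ) ≠ 0)
  rw [show (3/2:ℝ)+1 = 5/2 by norm_num] at this
  rw [this, Gamma_three_half]; ring

-- upper base [1/2, 1]
lemma upper_base1 {z : ℝ} (h1 : 1/2 ≤ z) (h2 : z ≤ 1) :
    Real.Gamma z ≤ (37/10) * z ^ (z - 1/2 : ℝ) * exp (-z) := by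
  have hz : 0 < z := by linarith
  have hchord : Real.log (Real.Gamma z) ≤ (1-z) * Real.log π := by
    have := logGamma_chord (x := 1/2) (y := 1) (a := 2-2*z) (b := 2*z-1)
      (by norm_num) (by norm_num) (by linarith) (by linarith) (by ring)
    rw [show (2-2*z)*(1/2:ℝ) + (2*z-1)*1 = z by ring, Real.Gamma_one_half_eq,
      Real.Gamma_one, Real.log_one, Real.log_sqrt Real.pi_pos.le] at this
    calc Real.log (Real.Gamma z) ≤ (2-2*z) * (Real.log π / 2) + (2*z-1)*0 := this
      _ = (1-z) * Real.log π := by ring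
  have hlogz : 1 - 1/z ≤ Real.log z := by
    have := Real.log_le_sub_one_of_pos (show (0:ℝ) < 1/z by positivity)
    rw [Real.log_div one_ne_zero hz.ne', Real.log_one] at this
    linarith
  have hlgz : -(1/8 : ℝ) ≤ (z - 1/2) * Real.log z := by
    have h := mul_le_mul_of_nonneg_left hlogz (by linarith : (0:ℝ) ≤ z - 1/2)
    have : -(1/8:ℝ) ≤ (z - 1/2) * (1 - 1/z) := by
      rw [show (z - 1/2) * (1 - 1/z) = (z-1/2)*(z-1)/z by field_simp]
      rw [neg_le, ← neg_div, div_le_iff₀ hz]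
      nlinarith [sq_nonneg (z - 3/4)]
    linarith
  have hpi1 : 1 ≤ Real.log π := by
    rw [Real.le_log_iff_exp_le Real.pi_pos]
    calc exp 1 ≤ 2.7182818286 := e_lt.le
      _ ≤ π := by linarith [pi_gt]
  have hnum : (1/2) * Real.log π + 1/2 + 1/8 ≤ Real.log (37/10) := by
    have hexp : exp (5/4 : ℝ) ≤ 3.4935 := by
      have h4 : exp (5/4:ℝ) ^ (4:ℕ) = exp 1 ^ (5:ℕ) := by
        rw [← Real.exp_nat_mul, ← Real.exp_nat_mul]; norm_num
      have h5 : exp 1 ^ (5:ℕ) ≤ 2.7182818286 ^ (5:ℕ) :=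
        pow_le_pow_left₀ (Real.exp_pos 1).le e_lt.le 5
      have : exp (5/4:ℝ) ^ (4:ℕ) ≤ (3.4935:ℝ)^(4:ℕ) := by rw [h4]; nlinarith [h5]
      exact le_of_pow_le_pow_left₀ (by norm_num) (by norm_num) this
    have hmul : π * exp (5/4:ℝ) ≤ (37/10)^2 := by nlinarith [pi_lt, Real.exp_pos (5/4:ℝ)]
    have := Real.log_le_log (by positivity) hmul
    rw [Real.log_mul Real.pi_pos.ne' (Real.exp_pos _).ne', Real.log_exp,
      show ((37:ℝ)/10)^2 = (37/10)*(37/10) by ring,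
      Real.log_mul (by norm_num) (by norm_num)] at this
    linarith
  have hfin : (1-z) * Real.log π ≤ Real.log (37/10) + (z - 1/2) * Real.log z - z := by
    nlinarith [mul_nonneg (by linarith : (0:ℝ) ≤ z - 1/2) (by linarith : (0:ℝ) ≤ Real.log π - 1)]
  rw [target_form _ _ (by norm_num) hz]
  calc Real.Gamma z = exp (Real.log (Real.Gamma z)) :=
        (Real.exp_log (Real.Gamma_pos_of_pos hz)).symm
    _ ≤ _ := by apply Real.exp_le_exp.2; linarith




lemma B2_le : Real.log (Real.sqrt π / 2) ≤ -(1/10) := by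
  have h := Real.log_le_sub_one_of_pos (show (0:ℝ) < Real.sqrt π / 2 by positivity)
  have := sqrtpi_le; linarith
lemma B2_ge : -(1/2:ℝ) ≤ Real.log (Real.sqrt π / 2) := by
  rw [show (-(1/2:ℝ)) = Real.log (exp (-(1/2))) by rw [Real.log_exp]]
  apply Real.log_le_log (Real.exp_pos _)
  have h2 : exp (-(1/2):ℝ) ^ (2:ℕ) = (exp 1)⁻¹ := by
    rw [← Real.exp_nat_mul]; norm_num [Real.exp_neg]
  have hb : exp (-(1/2):ℝ) ≤ 0.62 := by
    refine le_of_pow_le_pow_left₀ (two_ne_zero) (by norm_num) ?_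
    rw [h2]
    rw [inv_le_comm₀ (Real.exp_pos 1) (by norm_num)]
    have : (2.7182818283:ℝ) < exp 1 := by have := Real.exp_one_gt_d9; linarith
    calc ((0.62:ℝ)^(2:ℕ))⁻¹ ≤ (2.7182818283:ℝ) := by norm_num
      _ ≤ exp 1 := this.le
  have := sqrtpi_ge; linarith
lemma logC_ge : (13/10:ℝ) ≤ Real.log (37/10) := by
  rw [show (13/10:ℝ) = Real.log (exp (13/10)) by rw [Real.log_exp]]
  apply Real.log_le_log (Real.exp_pos _)
  have h10 : exp (13/10:ℝ) ^ (10:ℕ) = exp 1 ^ (13:ℕ) := by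
    rw [← Real.exp_nat_mul, ← Real.exp_nat_mul]; norm_num
  refine le_of_pow_le_pow_left₀ (by norm_num) (by norm_num) (n := 10) ?_
  rw [h10]
  calc exp 1 ^ (13:ℕ) ≤ 2.7182818286 ^ (13:ℕ) := pow_le_pow_left₀ (Real.exp_pos 1).le e_lt.le 13
    _ ≤ (37/10:ℝ) ^ (10:ℕ) := by norm_num
lemma log54_ge : (11/50:ℝ) ≤ Real.log (5/4) := by
  rw [show (11/50:ℝ) = Real.log (exp (11/50)) by rw [Real.log_exp]]
  apply Real.log_le_log (Real.exp_pos _)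
  have h50 : exp (11/50:ℝ) ^ (50:ℕ) = exp 1 ^ (11:ℕ) := by
    rw [← Real.exp_nat_mul, ← Real.exp_nat_mul]; norm_num
  refine le_of_pow_le_pow_left₀ (by norm_num) (by norm_num) (n := 50) ?_
  rw [h50]
  calc exp 1 ^ (11:ℕ) ≤ 2.7182818286 ^ (11:ℕ) := pow_le_pow_left₀ (Real.exp_pos 1).le e_lt.le 11
    _ ≤ (5/4:ℝ) ^ (50:ℕ) := by norm_num

lemma chord2 {z : ℝ} (h1 : 1 ≤ z) (h2 : z ≤ 3/2) :
    Real.log (Real.Gamma z) ≤ (2*z-2) * Real.log (Real.sqrt π / 2) := by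
  have := logGamma_chord (x := 1) (y := 3/2) (a := 3-2*z) (b := 2*z-2)
    (by norm_num) (by norm_num) (by linarith) (by linarith) (by ring)
  rw [show (3-2*z)*(1:ℝ) + (2*z-2)*(3/2) = z by ring, Real.Gamma_one, Real.log_one,
    Gamma_three_half] at this
  linarith

lemma upper_base2 {z : ℝ} (h1 : 1 ≤ z) (h2 : z ≤ 5/4) :
    Real.Gamma z ≤ (37/10) * z ^ (z - 1/2 : ℝ) * exp (-z) := by
  have hz : 0 < z := by linarith
  set B2 := Real.log (Real.sqrt π / 2) with hB2
  have hlgz : 0 ≤ (z - 1/2) * Real.log z :=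
    mul_nonneg (by linarith) (Real.log_nonneg h1)
  have hmax : (2*z-2)*B2 + z ≤ (1/2)*B2 + 5/4 := by
    nlinarith [mul_nonneg (by linarith : (0:ℝ) ≤ 5/2 - 2*z) (by linarith [B2_ge] : (0:ℝ) ≤ B2 + 1/2)]
  have hfin : (2*z-2)*B2 ≤ Real.log (37/10) + (z - 1/2) * Real.log z - z := by
    have := B2_le; have := logC_ge; linarith
  rw [target_form _ _ (by norm_num) hz]
  calc Real.Gamma z = exp (Real.log (Real.Gamma z)) :=
        (Real.exp_log (Real.Gamma_pos_of_pos hz)).symm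
    _ ≤ _ := by apply Real.exp_le_exp.2; linarith [chord2 h1 (by linarith : z ≤ 3/2)]

lemma upper_base3 {z : ℝ} (h1 : 5/4 ≤ z) (h2 : z ≤ 3/2) :
    Real.Gamma z ≤ (37/10) * z ^ (z - 1/2 : ℝ) * exp (-z) := by
  have hz : 0 < z := by linarith
  set B2 := Real.log (Real.sqrt π / 2) with hB2
  have hlog54 : Real.log (5/4) ≤ Real.log z := Real.log_le_log (by norm_num) h1
  have hlgz : (3/4) * Real.log (5/4) ≤ (z - 1/2) * Real.log z := by
    have g1 : (z - 1/2) * Real.log (5/4) ≤ (z - 1/2) * Real.log z :=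
      mul_le_mul_of_nonneg_left hlog54 (by linarith)
    have g2 : (3/4) * Real.log (5/4) ≤ (z - 1/2) * Real.log (5/4) :=
      mul_le_mul_of_nonneg_right (by linarith) (by positivity)
    linarith
  have hmax : (2*z-2)*B2 + z ≤ B2 + 3/2 := by
    nlinarith [mul_nonneg (by linarith : (0:ℝ) ≤ 3 - 2*z) (by linarith [B2_ge] : (0:ℝ) ≤ B2 + 1/2)]
  have hfin : (2*z-2)*B2 ≤ Real.log (37/10) + (z - 1/2) * Real.log z - z := by
    have := B2_le; have := logC_ge; have := log54_ge; linarith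
  rw [target_form _ _ (by norm_num) hz]
  calc Real.Gamma z = exp (Real.log (Real.Gamma z)) :=
        (Real.exp_log (Real.Gamma_pos_of_pos hz)).symm
    _ ≤ _ := by apply Real.exp_le_exp.2; linarith [chord2 (by linarith : 1 ≤ z) h2]

lemma one_le_mul_log {w : ℝ} (hw : 0 < w) :
    1 ≤ (w + 1/2) * (Real.log (w+1) - Real.log w) := by
  set u : ℝ := 1/(2*w+1) with hu
  have hu0 : 0 ≤ u := by positivity
  have hu1 : u < 1 := by
    rw [hu, div_lt_one (by linarith)]; linarith
  have key := artanh_ge u hu0 hu1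
  have e1 : (1:ℝ) + u = (w+1)/(w+1/2) := by rw [hu]; field_simp; ring
  have e2 : (1:ℝ) - u = w/(w+1/2) := by rw [hu]; field_simp; ring
  have l1 : Real.log (1+u) = Real.log (w+1) - Real.log (w+1/2) := by
    rw [e1, Real.log_div (by linarith) (by linarith)]
  have l2 : Real.log (1-u) = Real.log w - Real.log (w+1/2) := by
    rw [e2, Real.log_div (by linarith) (by linarith)]
  rw [l1, l2] at key
  have : 2*u*(w+1/2) = 1 := by rw [hu]; field_simp
  nlinarith [key, hw]

lemma upper_step {z : ℝ} (hz : 3/2 ≤ z)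
    (IH : Real.Gamma (z-1) ≤ (37/10) * (z-1) ^ (z-1 - 1/2 : ℝ) * exp (-(z-1))) :
    Real.Gamma z ≤ (37/10) * z ^ (z - 1/2 : ℝ) * exp (-z) := by
  have hw : (0:ℝ) < z - 1 := by linarith
  have hz0 : (0:ℝ) < z := by linarith
  have hgam : Real.Gamma z = (z-1) * Real.Gamma (z-1) := by
    have := Real.Gamma_add_one hw.ne'
    rw [show z - 1 + 1 = z by ring] at this
    exact this
  have hstep : (z-1) * ((37/10) * (z-1) ^ (z-1-1/2:ℝ) * exp (-(z-1)))
      ≤ (37/10) * z ^ (z - 1/2 : ℝ) * exp (-z) := by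
    rw [target_form _ _ (by norm_num) hz0, target_form _ _ (by norm_num) hw]
    rw [show (z-1) * exp (Real.log (37/10) + (z-1-1/2)*Real.log (z-1) - (z-1))
        = exp (Real.log (z-1)) * exp (Real.log (37/10) + (z-1-1/2)*Real.log (z-1) - (z-1)) by
      rw [Real.exp_log hw]]
    rw [← Real.exp_add]
    apply Real.exp_le_exp.2
    have key := one_le_mul_log hw
    rw [show z - 1 + 1 = z by ring] at key
    nlinarith [key]
  calc Real.Gamma z = (z-1) * Real.Gamma (z-1) := hgam
    _ ≤ (z-1) * ((37/10) * (z-1) ^ (z-1-1/2:ℝ) * exp (-(z-1))) := by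
        apply mul_le_mul_of_nonneg_left IH hw.le
    _ ≤ _ := hstep


lemma gamma_upper (z : ℝ) (hz : 1/2 ≤ z) :
    Real.Gamma z ≤ (37/10) * z ^ (z - 1/2 : ℝ) * exp (-z) := by
  have key : ∀ n : ℕ, ∀ w : ℝ, 1/2 ≤ w → w ≤ 3/2 + n →
      Real.Gamma w ≤ (37/10) * w ^ (w - 1/2 : ℝ) * exp (-w) := by
    intro n
    induction n with
    | zero =>
      intro w h1 h2
      push_cast at h2
      rcases le_total w 1 with h | h
      · exact upper_base1 h1 h
      · rcases le_total w (5/4) with h' | h'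
        · exact upper_base2 h h'
        · exact upper_base3 h' (by linarith)
    | succ n IH =>
      intro w h1 h2
      rcases le_total w ((3:ℝ)/2 + n) with h | h
      · exact IH w h1 h
      · refine upper_step (by linarith [Nat.cast_nonneg (α := ℝ) n] : (3:ℝ)/2 ≤ w) ?_
        apply IH
        · linarith [Nat.cast_nonneg (α := ℝ) n]
        · push_cast at h2 ⊢; linarith
  exact key ⌈z⌉₊ z hz (by linarith [Nat.le_ceil z])

lemma stirlingSeq_ge (n : ℕ) : Real.sqrt π ≤ Stirling.stirlingSeq (n+1) := by
  have ha : Antitone (Stirling.stirlingSeq ∘ Nat.succ) := Stirling.stirlingSeq'_antitone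
  have ht : Filter.Tendsto (Stirling.stirlingSeq ∘ Nat.succ) Filter.atTop (nhds (Real.sqrt π)) :=
    Stirling.tendsto_stirlingSeq_sqrt_pi.comp (Filter.tendsto_add_atTop_nat 1)
  exact ha.le_of_tendsto ht n

-- √(2π) N^(N-1/2) e^(-N) ≤ Γ(N)
lemma stirling_gamma (N : ℕ) (hN : 1 ≤ N) :
    Real.sqrt (2*π) * (N:ℝ) ^ ((N:ℝ) - 1/2) * exp (-(N:ℝ)) ≤ Real.Gamma N := by
  obtain ⟨m, rfl⟩ : ∃ m, N = m + 1 := ⟨N - 1, by omega⟩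
  have hfact := stirlingSeq_ge m
  rw [Stirling.stirlingSeq, le_div_iff₀ (by positivity)] at hfact
  set q : ℝ := ((m+1:ℕ):ℝ) with hq
  have hq0 : (0:ℝ) < q := by positivity
  have hgamma : q * Real.Gamma (m+1:ℕ) = Nat.factorial (m+1) := by
    rw [hq, show ((m+1:ℕ):ℝ) * Real.Gamma (m+1:ℕ) = Real.Gamma (((m+1:ℕ):ℝ)+1) by
      rw [Real.Gamma_add_one (by positivity)]]
    rw [show ((m+1:ℕ):ℝ)+1 = ((m+1:ℕ)+1:ℕ) by push_cast; ring]
    exact_mod_cast Real.Gamma_nat_eq_factorial (m+1)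
  rw [← mul_le_mul_iff_right₀ hq0, hgamma]
  calc q * (Real.sqrt (2*π) * q ^ (q - 1/2) * exp (-q))
      = Real.sqrt π * (Real.sqrt (2*q) * (q / exp 1) ^ (m+1)) := by
        have e1 : q ^ (q - 1/2) * q = (q:ℝ) ^ (m+1:ℕ) * Real.sqrt q := by
          have h1 : q ^ (q - 1/2) * q = q ^ (q + 1/2 : ℝ) := by
            rw [show q + 1/2 = (q - 1/2) + 1 by ring, Real.rpow_add hq0, Real.rpow_one]
          rw [h1, show q + 1/2 = ((m+1:ℕ):ℝ) + 1/2 from by rw [hq], Real.rpow_add hq0,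
            Real.rpow_natCast, Real.sqrt_eq_rpow]
        have e2 : Real.exp (-q) = ((Real.exp 1) ^ (m+1))⁻¹ := by
          rw [Real.exp_neg, show q = ((m+1:ℕ):ℝ) * 1 by rw [hq, mul_one], Real.exp_nat_mul]
        rw [Real.sqrt_mul (by norm_num : (0:ℝ) ≤ 2) π, Real.sqrt_mul (by norm_num : (0:ℝ) ≤ 2) q,
          div_pow, show q * (Real.sqrt 2 * Real.sqrt π * q ^ (q - 1/2) * exp (-q))
            = Real.sqrt 2 * Real.sqrt π * (q ^ (q - 1/2) * q) * exp (-q) by ring, e1, e2]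
        have hep : (0:ℝ) < exp 1 ^ (m+1) := by positivity
        field_simp
      _ ≤ Nat.factorial (m+1) := hfact

-- helper : log x ≤ a/b from x^b ≤ e^a
lemma log_le_of_pow (x : ℝ) (a b : ℕ) (hx : 0 < x) (hb : 0 < b)
    (h : x ^ b ≤ 2.7182818283 ^ a) : Real.log x ≤ (a:ℝ)/b := by
  have h2 : x ^ b ≤ exp 1 ^ a := le_trans h (pow_le_pow_left₀ (by norm_num) e_gt.le a)
  have h3 : x ≤ exp ((a:ℝ)/b) := by
    have : x ^ b ≤ exp ((a:ℝ)/b) ^ b := by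
      rw [← Real.exp_nat_mul]
      rw [show (b:ℝ) * ((a:ℝ)/b) = (a:ℝ) by field_simp]
      rw [show exp (a:ℝ) = exp 1 ^ a by rw [← Real.exp_nat_mul]; norm_num]
      exact h2
    exact le_of_pow_le_pow_left₀ hb.ne' (Real.exp_pos _).le this
  calc Real.log x ≤ Real.log (exp ((a:ℝ)/b)) := Real.log_le_log hx h3
    _ = (a:ℝ)/b := Real.log_exp _

lemma log_ge_of_pow (x : ℝ) (a b : ℕ) (hx : 0 < x) (hb : 0 < b)
    (h : (2.7182818286:ℝ) ^ a ≤ x ^ b) : (a:ℝ)/b ≤ Real.log x := by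
  have h2 : exp 1 ^ a ≤ x ^ b := le_trans (pow_le_pow_left₀ (Real.exp_pos 1).le e_lt.le a) h
  have h3 : exp ((a:ℝ)/b) ≤ x := by
    have : exp ((a:ℝ)/b) ^ b ≤ x ^ b := by
      rw [← Real.exp_nat_mul, show (b:ℝ) * ((a:ℝ)/b) = (a:ℝ) by field_simp,
        show exp (a:ℝ) = exp 1 ^ a by rw [← Real.exp_nat_mul]; norm_num]
      exact h2
    exact le_of_pow_le_pow_left₀ hb.ne' hx.le this
  calc ((a:ℝ)/b) = Real.log (exp ((a:ℝ)/b)) := (Real.log_exp _).symm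
    _ ≤ Real.log x := Real.log_le_log (Real.exp_pos _) h3

lemma exp_quarter_le : exp (1/4:ℝ) ≤ 1.2841 := by
  have h4 : exp (1/4:ℝ) ^ (4:ℕ) = exp 1 := by
    rw [← Real.exp_nat_mul]; norm_num
  have hb : exp (1/4:ℝ) ^ (4:ℕ) ≤ (1.2841:ℝ)^(4:ℕ) := by
    rw [h4]; nlinarith [e_lt]
  exact le_of_pow_le_pow_left₀ (by norm_num) (by norm_num) hb

lemma sqrt_two_pi_ge : (2.5066:ℝ) ≤ Real.sqrt (2*π) := by
  rw [show (2.5066:ℝ) = Real.sqrt (2.5066^2) by rw [Real.sqrt_sq]; norm_num]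
  apply Real.sqrt_le_sqrt
  nlinarith [pi_gt]

lemma num_main : (37/20:ℝ) * exp (1/4) ≤ Real.sqrt (2*π) := by
  nlinarith [exp_quarter_le, sqrt_two_pi_ge, Real.exp_pos (1/4:ℝ)]

lemma log_sqrt_2pi : Real.log (37/20) + 1/4 ≤ Real.log (Real.sqrt (2*π)) := by
  have h := Real.log_le_log (by positivity) num_main
  rwa [Real.log_mul (by norm_num) (Real.exp_pos _).ne', Real.log_exp] at h

lemma lg_nat_step (M : ℕ) (hM : 1 ≤ M) :
    Real.log (Real.Gamma ((M:ℝ)+1)) = Real.log M + Real.log (Real.Gamma M) := by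
  have hM0 : (0:ℝ) < M := by exact_mod_cast hM
  rw [Real.Gamma_add_one hM0.ne', Real.log_mul hM0.ne'
    (Real.Gamma_pos_of_pos hM0).ne']

lemma stir_log (M : ℕ) (hM : 1 ≤ M) :
    Real.log (Real.sqrt (2*π)) + ((M:ℝ)-1/2)*Real.log M - M ≤ Real.log (Real.Gamma M) := by
  have hM0 : (0:ℝ) < M := by exact_mod_cast hM
  have h := Real.log_le_log (by positivity) (stirling_gamma M hM)
  rwa [Real.log_mul (by positivity) (Real.exp_pos _).ne',
    Real.log_mul (by positivity) (by positivity), Real.log_rpow hM0, Real.log_exp] at h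

lemma lower_M (M : ℕ) (hM : 2 ≤ M) {z : ℝ} (h1 : (M:ℝ) - 1/2 ≤ z) (h2 : z ≤ M) :
    (37/20) * z ^ (z - 1/2 : ℝ) * exp (-z) ≤ Real.Gamma z := by
  have hMR : (2:ℝ) ≤ M := by exact_mod_cast hM
  have hM0 : (0:ℝ) < M := by linarith
  have hz : 0 < z := by linarith
  set s := (M:ℝ) - z with hs
  clear_value s
  have hs0 : 0 ≤ s := by rw [hs]; linarith
  have hs2 : s ≤ 1/2 := by rw [hs]; linarith
  have hstep1 : Real.log (Real.Gamma M) - s * Real.log M ≤ Real.log (Real.Gamma z) := by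
    rcases eq_or_lt_of_le h2 with h | h
    · rw [← h] at hs ⊢
      rw [show s = 0 by rw [hs]; ring]
      simp
    · have hsl := logGamma_slope hz h (show (M:ℝ) < (M:ℝ) + 1 by linarith)
      rw [lg_nat_step M (by omega), show (M:ℝ) + 1 - M = 1 by ring, div_one] at hsl
      rw [div_le_iff₀ (by linarith : (0:ℝ) < (M:ℝ) - z)] at hsl
      have : Real.log M + Real.log (Real.Gamma M) - Real.log (Real.Gamma M) = Real.log M := by ring
      rw [this] at hsl
      rw [hs]; nlinarith [hsl]
  have hstir := stir_log M (by omega)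
  have hlz : Real.log z ≤ Real.log M - s/M := by
    have h := Real.log_le_sub_one_of_pos (show (0:ℝ) < z/M by positivity)
    rw [Real.log_div hz.ne' hM0.ne'] at h
    have : z/(M:ℝ) - 1 = -(s/M) := by rw [hs]; field_simp; ring
    rw [this] at h; linarith
  have hmul : (z-1/2) * Real.log z ≤ (z-1/2)*Real.log M - (z-1/2)*(s/M) := by
    have := mul_le_mul_of_nonneg_left hlz (by linarith : (0:ℝ) ≤ z - 1/2)
    nlinarith [this]
  have hdiv : -(1/4:ℝ) ≤ (z-1/2)*(s/M) - s := by
    have hnn : (0:ℝ) ≤ (-s^2 - s/2 + M/4) := by nlinarith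
    have hq : (z-1/2)*(s/M) - s + 1/4 = (-s^2 - s/2 + M/4)/M := by
      rw [hs]; field_simp; ring
    have : (0:ℝ) ≤ (-s^2 - s/2 + M/4)/M := div_nonneg hnn hM0.le
    linarith [hq ▸ this]
  have hring : (z-1/2)*Real.log M + s*Real.log M = ((M:ℝ)-1/2)*Real.log M := by
    rw [hs]; ring
  have hnum := log_sqrt_2pi
  rw [target_form _ _ (by norm_num) hz,
    show Real.Gamma z = exp (Real.log (Real.Gamma z)) from
      (Real.exp_log (Real.Gamma_pos_of_pos hz)).symm]
  apply Real.exp_le_exp.2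
  have hzs : z = (M:ℝ) - s := by rw [hs]; ring
  linarith [hmul, hstep1, hstir, hdiv, hring, hnum]

lemma lower_N (N : ℕ) (hN : 3 ≤ N) {z : ℝ} (h1 : (N:ℝ) ≤ z) (h2 : z ≤ (N:ℝ) + 1/2) :
    (37/20) * z ^ (z - 1/2 : ℝ) * exp (-z) ≤ Real.Gamma z := by
  have hNR : (3:ℝ) ≤ N := by exact_mod_cast hN
  have hN0 : (0:ℝ) < N := by linarith
  have hN1 : (0:ℝ) < (N:ℝ) - 1 := by linarith
  have hz : 0 < z := by linarith
  set s := z - (N:ℝ) with hs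
  clear_value s
  have hs0 : 0 ≤ s := by rw [hs]; linarith
  have hs2 : s ≤ 1/2 := by rw [hs]; linarith
  have hlogN1 : Real.log ((N:ℝ)-1) = Real.log (Real.Gamma N) - Real.log (Real.Gamma ((N:ℝ)-1)) := by
    have hg : Real.Gamma ((N:ℝ)) = ((N:ℝ)-1) * Real.Gamma ((N:ℝ)-1) := by
      have := Real.Gamma_add_one hN1.ne'
      rw [show (N:ℝ) - 1 + 1 = (N:ℝ) by ring] at this
      exact this
    rw [hg, Real.log_mul hN1.ne' (Real.Gamma_pos_of_pos hN1).ne']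
    ring
  have hstep1 : Real.log (Real.Gamma N) + s * Real.log ((N:ℝ)-1) ≤ Real.log (Real.Gamma z) := by
    rcases eq_or_lt_of_le h1 with h | h
    · rw [h, show s = 0 by rw [hs, ← h]; ring]
      simp
    · have hsl := logGamma_slope hN1 (show (N:ℝ)-1 < (N:ℝ) by linarith) h
      rw [show (N:ℝ) - ((N:ℝ)-1) = 1 by ring, div_one, ← hlogN1] at hsl
      rw [le_div_iff₀ (by linarith : (0:ℝ) < z - (N:ℝ))] at hsl
      rw [hs]; nlinarith [hsl]
  have hstir := stir_log N (by omega)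
  have hlz : Real.log z ≤ Real.log N + s/N := by
    have h := Real.log_le_sub_one_of_pos (show (0:ℝ) < z/N by positivity)
    rw [Real.log_div hz.ne' hN0.ne'] at h
    have : z/(N:ℝ) - 1 = s/N := by rw [hs]; field_simp
    rw [this] at h; linarith
  have hmul : (z-1/2) * Real.log z ≤ (z-1/2)*Real.log N + (z-1/2)*(s/N) := by
    have := mul_le_mul_of_nonneg_left hlz (by linarith : (0:ℝ) ≤ z - 1/2)
    nlinarith [this]
  have hlN1 : Real.log N - 1/((N:ℝ)-1) ≤ Real.log ((N:ℝ)-1) := by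
    have h := Real.log_le_sub_one_of_pos (show (0:ℝ) < (N:ℝ)/((N:ℝ)-1) by positivity)
    rw [Real.log_div hN0.ne' hN1.ne'] at h
    have : (N:ℝ)/((N:ℝ)-1) - 1 = 1/((N:ℝ)-1) := by field_simp; ring
    rw [this] at h; linarith
  have hmulN1 : s * Real.log N - s/((N:ℝ)-1) ≤ s * Real.log ((N:ℝ)-1) := by
    have h0 := mul_le_mul_of_nonneg_left hlN1 hs0
    have h1 : s * (Real.log N - 1/((N:ℝ)-1)) = s*Real.log N - s/((N:ℝ)-1) := by ring
    linarith [h0, h1]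
  have hdiv : (z-1/2)*(s/N) - s ≤ 0 := by
    have hq : (z-1/2)*(s/N) - s = (s^2 - s/2)/N := by rw [hs]; field_simp; ring
    rw [hq]
    apply div_nonpos_of_nonpos_of_nonneg _ hN0.le
    nlinarith
  have hsN1 : s/((N:ℝ)-1) ≤ 1/4 := by
    rw [div_le_iff₀ hN1]; linarith
  have hnum := log_sqrt_2pi
  have hring : (z-1/2)*Real.log N = ((N:ℝ)-1/2)*Real.log N + s*Real.log N := by
    rw [hs]; ring
  rw [target_form _ _ (by norm_num) hz,
    show Real.Gamma z = exp (Real.log (Real.Gamma z)) from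
      (Real.exp_log (Real.Gamma_pos_of_pos hz)).symm]
  apply Real.exp_le_exp.2
  linarith [hmul, hstep1, hstir, hdiv, hring, hnum, hmulN1, hsN1]




lemma log_ge_neg_of_pow (x : ℝ) (a b : ℕ) (hx : 0 < x) (hb : 0 < b)
    (h : (1:ℝ) ≤ x ^ b * 2.7182818283 ^ a) : -((a:ℝ)/b) ≤ Real.log x := by
  have h2 : (1:ℝ) ≤ x ^ b * exp 1 ^ a := by
    have : (2.7182818283:ℝ) ^ a ≤ exp 1 ^ a := pow_le_pow_left₀ (by norm_num) e_gt.le a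
    nlinarith [pow_pos hx b]
  have h3 : exp (-((a:ℝ)/b)) ≤ x := by
    have hpow : exp (-((a:ℝ)/b)) ^ b ≤ x ^ b := by
      rw [← Real.exp_nat_mul, show (b:ℝ) * (-((a:ℝ)/b)) = -(a:ℝ) by field_simp]
      rw [Real.exp_neg, inv_le_comm₀ (Real.exp_pos _) (pow_pos hx b),
        show exp (a:ℝ) = exp 1 ^ a by rw [← Real.exp_nat_mul]; norm_num,
        inv_le_iff_one_le_mul₀ (pow_pos hx b)]
      linarith [h2]
    exact le_of_pow_le_pow_left₀ hb.ne' hx.le hpow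
  calc (-((a:ℝ)/b)) = Real.log (exp (-((a:ℝ)/b))) := (Real.log_exp _).symm
    _ ≤ Real.log x := Real.log_le_log (Real.exp_pos _) h3

lemma logc_le : Real.log (37/20) ≤ 77/125 := by
  have := log_le_of_pow (37/20) 77 125 (by norm_num) (by norm_num) (by norm_num)
  simpa using this
lemma mu_le : Real.log 2 ≤ 7/10 := by
  have := log_le_of_pow 2 7 10 (by norm_num) (by norm_num) (by norm_num)
  simpa using this
lemma lam_le : Real.log (3/2) ≤ 41/100 := by
  have := log_le_of_pow (3/2) 41 100 (by norm_num) (by norm_num) (by norm_num)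
  simpa using this
lemma nu_le : Real.log (5/2) ≤ 23/25 := by
  have := log_le_of_pow (5/2) 23 25 (by norm_num) (by norm_num) (by norm_num)
  simpa using this
lemma L5_ge : (141/500:ℝ) ≤ Real.log (3 * Real.sqrt π / 4) := by
  have h1 : (1329/1000:ℝ) ≤ 3 * Real.sqrt π / 4 := by linarith [sqrtpi_ge]
  have h2 := log_ge_of_pow (1329/1000) 141 500 (by norm_num) (by norm_num) (by rw [show (500:ℕ) = 250*2 by norm_num, pow_mul]; norm_num)
  calc (141/500:ℝ) = ((141:ℕ):ℝ)/((500:ℕ):ℝ) := by norm_num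
    _ ≤ Real.log (1329/1000) := h2
    _ ≤ _ := Real.log_le_log (by norm_num) h1
lemma L5_le : Real.log (3 * Real.sqrt π / 4) ≤ 7/20 := by
  have h1 : 3 * Real.sqrt π / 4 ≤ 27/20 := by linarith [sqrtpi_le]
  have h2 := log_le_of_pow (27/20) 7 20 (by norm_num) (by norm_num) (by norm_num)
  calc Real.log (3 * Real.sqrt π / 4) ≤ Real.log (27/20) :=
        Real.log_le_log (by positivity) h1
    _ ≤ (7:ℝ)/20 := by simpa using h2
lemma L5_nonneg : (0:ℝ) ≤ Real.log (3 * Real.sqrt π / 4) := by linarith [L5_ge]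
lemma L3_ge : -(13/100:ℝ) ≤ Real.log (Real.sqrt π / 2) := by
  have h1 : (443/500:ℝ) ≤ Real.sqrt π / 2 := by linarith [sqrtpi_ge]
  have h2 := log_ge_neg_of_pow (443/500) 13 100 (by norm_num) (by norm_num) (by norm_num)
  calc -(13/100:ℝ) = -(((13:ℕ):ℝ)/((100:ℕ):ℝ)) := by norm_num
    _ ≤ Real.log (443/500) := h2
    _ ≤ _ := Real.log_le_log (by norm_num) h1
lemma L3_nonpos : Real.log (Real.sqrt π / 2) ≤ 0 := by
  have h1 : Real.sqrt π / 2 ≤ 1 := by linarith [sqrtpi_le]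
  calc Real.log (Real.sqrt π / 2) ≤ Real.log 1 := Real.log_le_log (by positivity) h1
    _ = 0 := Real.log_one

lemma lin_le {A B z α β : ℝ} (h1 : α ≤ z) (h2 : z ≤ β)
    (hα : A + B*α ≤ 0) (hβ : A + B*β ≤ 0) : A + B*z ≤ 0 := by
  rcases le_total 0 B with h | h
  · nlinarith
  · nlinarith


lemma Gamma_three : Real.Gamma 3 = 2 := by
  have := Real.Gamma_add_one (two_ne_zero)
  rw [show (2:ℝ)+1 = 3 by norm_num] at this
  rw [this, Real.Gamma_two]; norm_num

-- extrapolation bound used on [2, 5/2]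
lemma lg_spec {z : ℝ} (h1 : 2 ≤ z) (h2 : z ≤ 5/2) :
    Real.log (Real.Gamma (5/2)) - (5/2 - z) * (2*Real.log 2 - 2*Real.log (Real.Gamma (5/2)))
      ≤ Real.log (Real.Gamma z) := by
  rcases eq_or_lt_of_le h2 with h | h
  · rw [h]; norm_num
  · have hsl := logGamma_slope (show (0:ℝ) < z by linarith) h (by norm_num : (5/2:ℝ) < 3)
    rw [Gamma_three, show (3:ℝ) - 5/2 = 1/2 by norm_num] at hsl
    rw [div_le_div_iff₀ (by linarith) (by norm_num)] at hsl
    nlinarith [hsl]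

lemma lower_spec1 {z : ℝ} (h1 : 2 ≤ z) (h2 : z ≤ 9/4) :
    (37/20) * z ^ (z - 1/2 : ℝ) * exp (-z) ≤ Real.Gamma z := by
  have hz : (0:ℝ) < z := by linarith
  have hlz : Real.log z ≤ 2 * Real.log (3/2) := by
    rw [show (2:ℝ) * Real.log (3/2) = Real.log ((3/2)^2) by rw [Real.log_pow]; push_cast; ring]
    exact Real.log_le_log hz (by nlinarith)
  have hmul : (z-1/2) * Real.log z ≤ (z-1/2) * (2*Real.log (3/2)) :=
    mul_le_mul_of_nonneg_left hlz (by linarith)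
  set lam := Real.log (3/2)
  set mu := Real.log 2
  set L5 := Real.log (Real.Gamma (5/2)) with hL5
  have hL5' : L5 = Real.log (3 * Real.sqrt π / 4) := by rw [hL5, Gamma_five_half]
  have hlin : (Real.log (37/20) - lam + 5*mu - 6*L5) + (2*lam - 1 - 2*mu + 2*L5) * z ≤ 0 := by
    apply lin_le h1 h2
    · have := logc_le; have := lam_le; have := mu_le
      have := L5_ge; rw [← hL5'] at this; linarith
    · have := logc_le; have := lam_le; have := mu_le
      have := L5_ge; rw [← hL5'] at this; linarith
  rw [target_form _ _ (by norm_num) hz,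
    show Real.Gamma z = exp (Real.log (Real.Gamma z)) from
      (Real.exp_log (Real.Gamma_pos_of_pos hz)).symm]
  apply Real.exp_le_exp.2
  have hstep := lg_spec h1 (by linarith : z ≤ 5/2)
  nlinarith [hmul, hstep, hlin]

lemma lower_spec2 {z : ℝ} (h1 : 9/4 ≤ z) (h2 : z ≤ 5/2) :
    (37/20) * z ^ (z - 1/2 : ℝ) * exp (-z) ≤ Real.Gamma z := by
  have hz : (0:ℝ) < z := by linarith
  have hlz : Real.log z ≤ Real.log (5/2) := Real.log_le_log hz (by linarith)
  have hmul : (z-1/2) * Real.log z ≤ (z-1/2) * Real.log (5/2) :=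
    mul_le_mul_of_nonneg_left hlz (by linarith)
  set nu := Real.log (5/2)
  set mu := Real.log 2
  set L5 := Real.log (Real.Gamma (5/2)) with hL5
  have hL5' : L5 = Real.log (3 * Real.sqrt π / 4) := by rw [hL5, Gamma_five_half]
  have hlin : (Real.log (37/20) - nu/2 + 5*mu - 6*L5) + (nu - 1 - 2*mu + 2*L5) * z ≤ 0 := by
    apply lin_le h1 h2
    · have := logc_le; have := nu_le; have := mu_le
      have := L5_ge; rw [← hL5'] at this; linarith
    · have := logc_le; have := nu_le; have := mu_le
      have h5 := L5_ge; rw [← hL5'] at h5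
      have h5' := L5_le; rw [← hL5'] at h5'; linarith
  rw [target_form _ _ (by norm_num) hz,
    show Real.Gamma z = exp (Real.log (Real.Gamma z)) from
      (Real.exp_log (Real.Gamma_pos_of_pos hz)).symm]
  apply Real.exp_le_exp.2
  have hstep := lg_spec (by linarith : 2 ≤ z) h2
  nlinarith [hmul, hstep, hlin]

lemma lower_base1 {z : ℝ} (h1 : 1/2 ≤ z) (h2 : z ≤ 1) :
    (37/20) * z ^ (z - 1/2 : ℝ) * exp (-z) ≤ Real.Gamma z := by
  have hz : (0:ℝ) < z := by linarith
  set L5 := Real.log (Real.Gamma (5/2)) with hL5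
  have hL5' : L5 = Real.log (3 * Real.sqrt π / 4) := by rw [hL5, Gamma_five_half]
  have hL5ge : (0:ℝ) ≤ L5 := by rw [hL5']; exact L5_nonneg
  have hL5le : L5 ≤ 7/20 := by rw [hL5']; exact L5_le
  -- lg (z+1) ≥ -(1-z) * 2 * L5
  have hstep : -(1-z) * (2*L5) ≤ Real.log (Real.Gamma (z+1)) := by
    rcases eq_or_lt_of_le h2 with h | h
    · rw [h]; norm_num [Real.Gamma_two]
    · have hsl := logGamma_slope (show (0:ℝ) < z+1 by linarith)
        (show z+1 < 2 by linarith) (by norm_num : (2:ℝ) < 5/2)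
      rw [Real.Gamma_two, Real.log_one, show (5/2:ℝ) - 2 = 1/2 by norm_num] at hsl
      rw [div_le_div_iff₀ (by linarith) (by norm_num)] at hsl
      nlinarith [hsl]
  have hgz : Real.log (Real.Gamma z) = Real.log (Real.Gamma (z+1)) - Real.log z := by
    rw [Real.Gamma_add_one hz.ne', Real.log_mul hz.ne' (Real.Gamma_pos_of_pos hz).ne']
    ring
  have hzl : Real.log z ≤ z - 1 := Real.log_le_sub_one_of_pos hz
  have hzneg : Real.log z ≤ 0 := Real.log_nonpos hz.le (by linarith)
  have hmul : (z-1/2) * Real.log z ≤ 0 :=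
    mul_nonpos_of_nonneg_of_nonpos (by linarith) hzneg
  rw [target_form _ _ (by norm_num) hz,
    show Real.Gamma z = exp (Real.log (Real.Gamma z)) from
      (Real.exp_log (Real.Gamma_pos_of_pos hz)).symm]
  apply Real.exp_le_exp.2
  rw [hgz]
  have hlc := logc_le
  nlinarith [hstep, hzl, hmul, hL5ge, hL5le]

lemma lower_base2 {z : ℝ} (h1 : 1 ≤ z) (h2 : z ≤ 3/2) :
    (37/20) * z ^ (z - 1/2 : ℝ) * exp (-z) ≤ Real.Gamma z := by
  have hz : (0:ℝ) < z := by linarith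
  set L3 := Real.log (Real.Gamma (3/2)) with hL3
  have hL3' : L3 = Real.log (Real.sqrt π / 2) := by rw [hL3, Gamma_three_half]
  have hL3ge : -(13/100:ℝ) ≤ L3 := by rw [hL3']; exact L3_ge
  have hL3le : L3 ≤ 0 := by rw [hL3']; exact L3_nonpos
  have hstep : L3 + (3/2 - z) * (2*L3) ≤ Real.log (Real.Gamma z) := by
    rcases eq_or_lt_of_le h2 with h | h
    · rw [h]; norm_num; exact hL3.le
    · have hsl := logGamma_slope hz h (by norm_num : (3/2:ℝ) < 2)
      rw [Real.Gamma_two, Real.log_one, show (2:ℝ) - 3/2 = 1/2 by norm_num, ← hL3] at hsl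
      rw [div_le_div_iff₀ (by linarith) (by norm_num)] at hsl
      nlinarith [hsl]
  have hzl : Real.log z ≤ z - 1 := Real.log_le_sub_one_of_pos hz
  have hzpos : 0 ≤ Real.log z := Real.log_nonneg h1
  have hmul : (z-1/2) * Real.log z ≤ Real.log z := by nlinarith [hzpos]
  rw [target_form _ _ (by norm_num) hz,
    show Real.Gamma z = exp (Real.log (Real.Gamma z)) from
      (Real.exp_log (Real.Gamma_pos_of_pos hz)).symm]
  apply Real.exp_le_exp.2
  have hlc := logc_le
  nlinarith [hstep, hzl, hmul, hL3ge, hL3le]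


lemma gamma_lower (z : ℝ) (hz : 1/2 ≤ z) :
    (37/20) * z ^ (z - 1/2 : ℝ) * exp (-z) ≤ Real.Gamma z := by
  rcases le_total z 1 with h | h
  · exact lower_base1 hz h
  rcases le_total z (3/2) with h2 | h2
  · exact lower_base2 h h2
  rcases le_total z 2 with h3 | h3
  · exact lower_M 2 le_rfl (by push_cast; linarith) (by push_cast; linarith)
  rcases le_total z (9/4) with h4 | h4
  · exact lower_spec1 h3 h4
  rcases le_total z (5/2) with h5 | h5
  · exact lower_spec2 h4 h5
  -- z ≥ 5/2
  set M := ⌈z⌉₊ with hM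
  have hzM : z ≤ M := Nat.le_ceil z
  have hM3 : 3 ≤ M := by
    have h0 : (2:ℕ) < ⌈z⌉₊ := by rw [Nat.lt_ceil]; push_cast; linarith
    omega
  have hMz : (M:ℝ) < z + 1 := by
    have := Nat.ceil_lt_add_one (show (0:ℝ) ≤ z by linarith)
    exact_mod_cast this
  clear_value M
  rcases le_or_gt ((M:ℝ) - 1/2) z with h6 | h6
  · exact lower_M M (by omega) h6 hzM
  · have hM4 : 4 ≤ M := by
      have h7 : (3:ℕ) < M := by
        have h8 : (3:ℝ) < (M:ℕ) := by linarith
        exact_mod_cast h8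
      omega
    refine lower_N (M-1) (by omega) ?_ ?_
    · push_cast [Nat.cast_sub (show 1 ≤ M by omega)]; linarith
    · push_cast [Nat.cast_sub (show 1 ≤ M by omega)]; linarith




theorem stmt_18 (n : ℕ) (hn : 1 ≤ n) (α ξ r : ℝ) (hα : 1/2 ≤ α) (hξ : 0 < ξ) (hr : 0 < r) :
    Real.Gamma (α * n) * (ξ * n * r) ^ (ξ * n * r) * Real.exp (-(ξ * n * r)) /
        Real.Gamma (α * n + ξ * n * r)
      ≤ 2 * Real.sqrt (1 + 2 * ξ * r) * Real.exp (-(n * α * Psi (ξ * r / α))) := by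
  have hn1 : (1:ℝ) ≤ n := by exact_mod_cast hn
  have hn0 : (0:ℝ) < n := by linarith
  have hα0 : (0:ℝ) < α := by linarith
  set a : ℝ := α * n with ha_def
  set x : ℝ := ξ * n * r with hx_def
  have hx : 0 < x := by positivity
  have ha0 : 0 < a := by positivity
  have ha : 1/2 ≤ a := by
    calc (1/2:ℝ) ≤ α := hα
      _ = α * 1 := by ring
      _ ≤ α * n := by apply mul_le_mul_of_nonneg_left hn1 hα0.le
  have hax0 : 0 < a + x := by linarith
  have hax : 1/2 ≤ a + x := by linarith
  have hGup := gamma_upper a ha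
  have hGlo := gamma_lower (a+x) hax
  have hGaxpos : 0 < Real.Gamma (a+x) := Real.Gamma_pos_of_pos hax0
  -- exp forms
  have hrw_a : a ^ (a - 1/2 : ℝ) = exp ((a - 1/2) * Real.log a) := by
    rw [Real.rpow_def_of_pos ha0]; ring_nf
  have hrw_x : x ^ x = exp (x * Real.log x) := by
    rw [Real.rpow_def_of_pos hx]; ring_nf
  have hrw_ax : (a+x) ^ (a + x - 1/2 : ℝ) = exp ((a + x - 1/2) * Real.log (a+x)) := by
    rw [Real.rpow_def_of_pos hax0]; ring_nf
  -- step 1 : bound the quotient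
  have step1 : Real.Gamma a * x ^ x * exp (-x) / Real.Gamma (a+x)
      ≤ ((37/10) * a ^ (a - 1/2:ℝ) * exp (-a) * (x ^ x * exp (-x)))
        / ((37/20) * (a+x) ^ (a + x - 1/2:ℝ) * exp (-(a+x))) := by
    apply div_le_div₀ (by positivity) _ (by positivity) hGlo
    calc Real.Gamma a * x ^ x * exp (-x)
        = Real.Gamma a * (x ^ x * exp (-x)) := by ring
      _ ≤ ((37/10) * a ^ (a - 1/2:ℝ) * exp (-a)) * (x ^ x * exp (-x)) := by
          apply mul_le_mul_of_nonneg_right hGup (by positivity)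
  -- step 2 : quotient equals 2 * exp E
  set E : ℝ := (a - 1/2) * Real.log a + x * Real.log x - (a + x - 1/2) * Real.log (a+x) with hE
  have step2 : ((37/10) * a ^ (a - 1/2:ℝ) * exp (-a) * (x ^ x * exp (-x)))
        / ((37/20) * (a+x) ^ (a + x - 1/2:ℝ) * exp (-(a+x))) = 2 * exp E := by
    rw [hrw_a, hrw_x, hrw_ax]
    rw [show (37/10:ℝ) * exp ((a-1/2)*Real.log a) * exp (-a) * (exp (x*Real.log x) * exp (-x))
        = (37/10) * exp ((a-1/2)*Real.log a + -a + (x*Real.log x + -x)) by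
      rw [Real.exp_add, Real.exp_add, Real.exp_add]; ring]
    rw [show (37/20:ℝ) * exp ((a+x-1/2)*Real.log (a+x)) * exp (-(a+x))
        = (37/20) * exp ((a+x-1/2)*Real.log (a+x) + -(a+x)) by
      rw [Real.exp_add]; ring]
    rw [mul_div_mul_comm, ← Real.exp_sub]
    rw [show (37:ℝ)/10 / (37/20) = 2 by norm_num]
    congr 1
    rw [hE]; ring
  -- Psi identity
  have hc1 : (n:ℝ) * α * (1 + ξ*r/α) = a + x := by
    rw [ha_def, hx_def]; field_simp
  have hc2 : (n:ℝ) * α * (ξ*r/α) = x := by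
    rw [hx_def]; field_simp
  have h1t : 1 + ξ*r/α = (a+x)/a := by
    rw [ha_def, hx_def]; field_simp
  have h2t : ξ*r/α = x/a := by
    rw [ha_def, hx_def]; field_simp
  have hlog1 : Real.log (1 + ξ*r/α) = Real.log (a+x) - Real.log a := by
    rw [h1t, Real.log_div hax0.ne' ha0.ne']
  have hlog2 : Real.log (ξ*r/α) = Real.log x - Real.log a := by
    rw [h2t, Real.log_div hx.ne' ha0.ne']
  have hPsi : (n:ℝ) * α * Psi (ξ*r/α)
      = (a+x) * Real.log (a+x) - a * Real.log a - x * Real.log x := by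
    rw [Psi, hlog1, hlog2]
    linear_combination (Real.log (a+x) - Real.log a) * hc1 - (Real.log x - Real.log a) * hc2
  -- sqrt comparison
  have hfrac : (a+x)/a ≤ 1 + 2*ξ*r := by
    rw [div_le_iff₀ ha0, ha_def, hx_def]
    nlinarith [mul_pos hξ (mul_pos hn0 hr), mul_pos hn0 hr]
  have hsqrt : Real.sqrt ((a+x)/a) ≤ Real.sqrt (1 + 2*ξ*r) := Real.sqrt_le_sqrt hfrac
  have hsqeq : Real.sqrt ((a+x)/a) = exp ((1/2) * (Real.log (a+x) - Real.log a)) := by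
    rw [Real.sqrt_eq_rpow, Real.rpow_def_of_pos (by positivity),
      Real.log_div hax0.ne' ha0.ne']
    ring_nf
  -- final comparison
  have hEeq : E = (1/2) * (Real.log (a+x) - Real.log a)
      + (-(((n:ℝ)) * α * Psi (ξ*r/α))) := by
    rw [hPsi, hE]; ring
  calc Real.Gamma a * x ^ x * exp (-x) / Real.Gamma (a+x)
      ≤ ((37/10) * a ^ (a - 1/2:ℝ) * exp (-a) * (x ^ x * exp (-x)))
        / ((37/20) * (a+x) ^ (a + x - 1/2:ℝ) * exp (-(a+x))) := step1
    _ = 2 * exp E := step2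
    _ = 2 * (Real.sqrt ((a+x)/a) * exp (-((n:ℝ) * α * Psi (ξ*r/α)))) := by
        rw [hsqeq, ← Real.exp_add, hEeq]
    _ ≤ 2 * (Real.sqrt (1 + 2*ξ*r) * exp (-((n:ℝ) * α * Psi (ξ*r/α)))) := by
        apply mul_le_mul_of_nonneg_left _ (by norm_num)
        apply mul_le_mul_of_nonneg_right hsqrt (Real.exp_pos _).le
    _ = 2 * Real.sqrt (1 + 2*ξ*r) * exp (-((n:ℝ) * α * Psi (ξ*r/α))) := by ring
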